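/- Let (q, p, H) solve the Painlevé III′ Hamiltonian system with parameters v1, v2 ∈ ℂ on an open set U ⊆ ℂ with 0 ∉ U, assume q(s) ≠ 0 and q(s)·(q(s)·p(s) − (v1+v2)/2) + s ≠ 0 for all s ∈ U, and let (q̃, p̃) be the T₂-transformed solution with parameters (v1+1, v2−1), given by p̃ := (q/s)·((v1+v2)/2 − qp) and q̃ := s/q − ((2+v1−v2)/2)·s/(q·(qp − (v1+v2)/2) + s), with Hamiltonian H̃. Define Q(t) := q(t²)/t and P(t) := t·p(t²) on V := {t ∈ ℂ : t ≠ 0, t² ∈ U}, which solve the Painlevé III Hamiltonian system with parameters (v1, v2), η0 = η∞ = 1, with Hamiltonian H_III. Then for all t ∈ V, with s = t²: t·H_III(t) = s·H(s) + s·H̃(s). That is, the Painlevé III Hamiltonian is the sum of the Painlevé III′ Hamiltonian with parameters (v1, v2) and the Painlevé III′ Hamiltonian with parameters T₂(v1, v2) = (v1+1, v2−1). -/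

import Mathlib

open Complex

set_option maxHeartbeats 1000000

lemma painleve_key (a b s v1 v2 : ℂ) (ha : a ≠ 0) (hs : s ≠ 0)
    (hD : a * (a * b - (v1 + v2) / 2) + s ≠ 0) :
    (s / a - (2 + v1 - v2) / 2 * s / (a * (a * b - (v1 + v2) / 2) + s)) ^ 2 *
        (a / s * ((v1 + v2) / 2 - a * b)) ^ 2 -
      ((s / a - (2 + v1 - v2) / 2 * s / (a * (a * b - (v1 + v2) / 2) + s)) ^ 2 +
          (v1 + 1) * (s / a - (2 + v1 - v2) / 2 * s / (a * (a * b - (v1 + v2) / 2) + s)) - s) *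
        (a / s * ((v1 + v2) / 2 - a * b)) +
      1 / 2 * (v1 + 1 + (v2 - 1)) *
        (s / a - (2 + v1 - v2) / 2 * s / (a * (a * b - (v1 + v2) / 2) + s)) =
      a ^ 2 * b ^ 2 - a ^ 2 * b - (v1 + 1) * (a * b) + s * b + 1 / 2 * (v1 + v2) * a := by
  have hD2 : a * (a * b - (v1 + v2) / 2) + s = s * (1 - a / s * ((v1 + v2) / 2 - a * b)) := by
    field_simp
    ring
  have h1c : (1 : ℂ) - a / s * ((v1 + v2) / 2 - a * b) ≠ 0 := fun h => hD (by rw [hD2, h, mul_zero])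
  rw [hD2]
  generalize hc : a / s * ((v1 + v2) / 2 - a * b) = c at h1c ⊢
  have hb : b = (a * ((v1 + v2) / 2) - s * c) / a ^ 2 := by
    rw [eq_div_iff (pow_ne_zero 2 ha), ← hc]
    field_simp
    ring
  obtain ⟨d, hd⟩ : ∃ d, d = 1 - c := ⟨_, rfl⟩
  have hd0 : d ≠ 0 := hd ▸ h1c
  have hc2 : c = 1 - d := by rw [hd]; ring
  have hX : s / a - (2 + v1 - v2) / 2 * s / (s * d) =
      (2 * s * d - (2 + v1 - v2) * a) / (2 * a * d) := by
    rw [div_sub_div _ _ ha (mul_ne_zero hs hd0), div_eq_div_iff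
      (mul_ne_zero ha (mul_ne_zero hs hd0)) (mul_ne_zero (mul_ne_zero two_ne_zero ha) hd0)]
    ring
  rw [hb, hc2]
  simp only [sub_sub_cancel]
  rw [hX]
  have hE : (2 * a * d : ℂ) ≠ 0 := by
    exact mul_ne_zero (mul_ne_zero two_ne_zero ha) hd0
  have hE2 : ((2 * a * d : ℂ)) ^ 2 ≠ 0 := pow_ne_zero 2 hE
  have hA2 : ((a : ℂ) ^ 2) ^ 2 ≠ 0 := pow_ne_zero 2 (pow_ne_zero 2 ha)
  set N : ℂ := 2 * s * d - (2 + v1 - v2) * a with hN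
  set M : ℂ := a * ((v1 + v2) / 2) - s * (1 - d) with hM
  have hL : (N / (2 * a * d)) ^ 2 * (1 - d) ^ 2 -
        ((N / (2 * a * d)) ^ 2 + (v1 + 1) * (N / (2 * a * d)) - s) * (1 - d) +
        1 / 2 * (v1 + 1 + (v2 - 1)) * (N / (2 * a * d)) =
      (N ^ 2 * ((1 - d) ^ 2 - (1 - d)) +
        (2 * a * d) * (1 / 2 * (v1 + 1 + (v2 - 1)) * N - (v1 + 1) * (1 - d) * N) +
        (2 * a * d) ^ 2 * (s * (1 - d))) / (2 * a * d) ^ 2 := by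
    rw [div_pow, eq_div_iff hE2]
    field_simp
    ring_nf
  have hR : a ^ 2 * (M / a ^ 2) ^ 2 - a ^ 2 * (M / a ^ 2) -
        (v1 + 1) * (a * (M / a ^ 2)) + s * (M / a ^ 2) + 1 / 2 * (v1 + v2) * a =
      (a ^ 2 * M ^ 2 + a ^ 2 * (-(a ^ 2 * M) - (v1 + 1) * (a * M) + s * M) +
        (a ^ 2) ^ 2 * (1 / 2 * (v1 + v2) * a)) / (a ^ 2) ^ 2 := by
    have h1 : M / a ^ 2 * a ^ 2 = M := div_mul_cancel₀ _ (pow_ne_zero 2 ha)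
    have h2 : (M / a ^ 2) ^ 2 * (a ^ 2) ^ 2 = M ^ 2 := by
      rw [div_pow]; exact div_mul_cancel₀ _ hA2
    rw [eq_div_iff hA2]
    linear_combination (a ^ 2) * h2 +
      (-(a ^ 2 * a ^ 2) - (v1 + 1) * a * a ^ 2 + s * a ^ 2) * h1
  rw [hL, hR, div_eq_div_iff hE2 hA2, hN, hM]
  ring


/-- `(q, p, H)` solves the Painlevé III′ Hamiltonian system with parameters
`v1, v2` on an open set `U ⊆ ℂ` with `0 ∉ U`. -/
def SolvesPIII' (v1 v2 : ℂ) (U : Set ℂ) (q p H : ℂ → ℂ) : Prop :=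
  IsOpen U ∧ (0 : ℂ) ∉ U ∧
    DifferentiableOn ℂ q U ∧ DifferentiableOn ℂ p U ∧
    (∀ s ∈ U, s * H s =
      q s ^ 2 * p s ^ 2 - (q s ^ 2 + v1 * q s - s) * p s
        + (1 / 2) * (v1 + v2) * q s) ∧
    (∀ s ∈ U, s * deriv q s = 2 * q s ^ 2 * p s - q s ^ 2 - v1 * q s + s) ∧
    (∀ s ∈ U, s * deriv p s =
      -2 * q s * p s ^ 2 + 2 * q s * p s + v1 * p s - (1 / 2) * (v1 + v2))

/-- `(q, p, H)` solves the Painlevé III Hamiltonian system with parameters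
`v1, v2, η0, ηinf` on an open set `U ⊆ ℂ` with `0 ∉ U`. -/
def SolvesPIII (v1 v2 η0 ηinf : ℂ) (U : Set ℂ) (q p H : ℂ → ℂ) : Prop :=
  IsOpen U ∧ (0 : ℂ) ∉ U ∧
    DifferentiableOn ℂ q U ∧ DifferentiableOn ℂ p U ∧
    (∀ t ∈ U, t * H t =
      2 * q t ^ 2 * p t ^ 2
        - (2 * ηinf * t * q t ^ 2 + (2 * v1 + 1) * q t - 2 * η0 * t) * p t
        + ηinf * (v1 + v2) * t * q t) ∧
    (∀ t ∈ U, t * deriv q t =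
      4 * q t ^ 2 * p t - 2 * ηinf * t * q t ^ 2 - (2 * v1 + 1) * q t + 2 * η0 * t) ∧
    (∀ t ∈ U, t * deriv p t =
      -4 * q t * p t ^ 2 + 4 * ηinf * t * q t * p t + (2 * v1 + 1) * p t
        - ηinf * (v1 + v2) * t)

/-- The Painlevé III Hamiltonian obtained from a Painlevé III′ solution via
`Q(t) = q(t²)/t`, `P(t) = t·p(t²)` is the sum of the Painlevé III′ Hamiltonian
with parameters `(v1, v2)` and the `T₂`-transformed Painlevé III′ Hamiltonian
with parameters `(v1+1, v2−1)`. -/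
theorem painleveIII_hamiltonian_sum (v1 v2 : ℂ) (U : Set ℂ)
    (q p H qt pt Ht : ℂ → ℂ)
    (hsol : SolvesPIII' v1 v2 U q p H)
    (hq : ∀ s ∈ U, q s ≠ 0)
    (hden : ∀ s ∈ U, q s * (q s * p s - (v1 + v2) / 2) + s ≠ 0)
    (hpt : ∀ s ∈ U, pt s = (q s / s) * ((v1 + v2) / 2 - q s * p s))
    (hqt : ∀ s ∈ U, qt s =
      s / q s - ((2 + v1 - v2) / 2) * s /
        (q s * (q s * p s - (v1 + v2) / 2) + s))
    (hsolt : SolvesPIII' (v1 + 1) (v2 - 1) U qt pt Ht)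
    (V : Set ℂ) (hV : V = {t : ℂ | t ≠ 0 ∧ t ^ 2 ∈ U})
    (Q P : ℂ → ℂ)
    (hQ : ∀ t ∈ V, Q t = q (t ^ 2) / t)
    (hP : ∀ t ∈ V, P t = t * p (t ^ 2)) :
    ∃ HIII : ℂ → ℂ,
      SolvesPIII v1 v2 1 1 V Q P HIII ∧
      ∀ t ∈ V, t * HIII t = t ^ 2 * H (t ^ 2) + t ^ 2 * Ht (t ^ 2) := by
  obtain ⟨hUo, hU0, hqd, hpd, hH, hq', hp'⟩ := hsol
  obtain ⟨_, _, _, _, hHt, _, _⟩ := hsolt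
  have hVo : IsOpen V := by
    rw [hV]
    exact isOpen_ne.inter (hUo.preimage (continuous_pow 2))
  have hV0 : (0 : ℂ) ∉ V := by
    rw [hV]; exact fun h => h.1 rfl
  have hmem : ∀ t ∈ V, t ≠ 0 ∧ t ^ 2 ∈ U := by
    intro t ht; rw [hV] at ht; exact ht
  -- differentiability of the model functions
  have hQd : ∀ t ∈ V, HasDerivAt Q
      ((deriv q (t ^ 2) * (2 * t) * t - q (t ^ 2) * 1) / t ^ 2) t := by
    intro t ht
    obtain ⟨ht0, hts⟩ := hmem t ht
    have hq2 : HasDerivAt (fun x : ℂ => x ^ 2) (2 * t) t := by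
      simpa [mul_comm] using hasDerivAt_pow 2 t
    have hqa : HasDerivAt q (deriv q (t ^ 2)) (t ^ 2) :=
      (hqd.differentiableAt (hUo.mem_nhds hts)).hasDerivAt
    have hc : HasDerivAt (fun x => q (x ^ 2)) (deriv q (t ^ 2) * (2 * t)) t :=
      hqa.comp t hq2
    have hd : HasDerivAt (fun x => q (x ^ 2) / x)
        ((deriv q (t ^ 2) * (2 * t) * t - q (t ^ 2) * 1) / t ^ 2) t :=
      hc.div (hasDerivAt_id t) ht0
    have heq : Q =ᶠ[nhds t] fun x => q (x ^ 2) / x :=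
      Filter.eventuallyEq_of_mem (hVo.mem_nhds ht) (fun x hx => hQ x hx)
    exact hd.congr_of_eventuallyEq heq
  have hPd : ∀ t ∈ V, HasDerivAt P
      (1 * p (t ^ 2) + t * (deriv p (t ^ 2) * (2 * t))) t := by
    intro t ht
    obtain ⟨ht0, hts⟩ := hmem t ht
    have hq2 : HasDerivAt (fun x : ℂ => x ^ 2) (2 * t) t := by
      simpa [mul_comm] using hasDerivAt_pow 2 t
    have hpa : HasDerivAt p (deriv p (t ^ 2)) (t ^ 2) :=
      (hpd.differentiableAt (hUo.mem_nhds hts)).hasDerivAt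
    have hc : HasDerivAt (fun x => p (x ^ 2)) (deriv p (t ^ 2) * (2 * t)) t :=
      hpa.comp t hq2
    have hd : HasDerivAt (fun x => x * p (x ^ 2))
        (1 * p (t ^ 2) + t * (deriv p (t ^ 2) * (2 * t))) t :=
      (hasDerivAt_id t).mul hc
    have heq : P =ᶠ[nhds t] fun x => x * p (x ^ 2) :=
      Filter.eventuallyEq_of_mem (hVo.mem_nhds ht) (fun x hx => hP x hx)
    exact hd.congr_of_eventuallyEq heq
  refine ⟨fun t => (t ^ 2 * H (t ^ 2) + t ^ 2 * Ht (t ^ 2)) / t,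
    ⟨hVo, hV0, fun t ht => ((hQd t ht).differentiableAt).differentiableWithinAt,
      fun t ht => ((hPd t ht).differentiableAt).differentiableWithinAt,
      ?_, ?_, ?_⟩, ?_⟩
  · -- Hamiltonian equation
    intro t ht
    obtain ⟨ht0, hts⟩ := hmem t ht
    have hs0 : (t ^ 2 : ℂ) ≠ 0 := pow_ne_zero 2 ht0
    have e1 := hH (t ^ 2) hts
    have e2 := hHt (t ^ 2) hts
    rw [hpt (t ^ 2) hts, hqt (t ^ 2) hts] at e2
    have hq0 := hq (t ^ 2) hts
    have hD0 := hden (t ^ 2) hts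
    rw [hQ t ht, hP t ht]
    have ht2 : t * ((t ^ 2 * H (t ^ 2) + t ^ 2 * Ht (t ^ 2)) / t)
        = t ^ 2 * H (t ^ 2) + t ^ 2 * Ht (t ^ 2) := by
      field_simp
    rw [painleve_key (q (t ^ 2)) (p (t ^ 2)) (t ^ 2) v1 v2 hq0 hs0 hD0] at e2
    rw [ht2, e1, e2]
    field_simp
    ring
  · -- q equation
    intro t ht
    obtain ⟨ht0, hts⟩ := hmem t ht
    have hs0 : (t ^ 2 : ℂ) ≠ 0 := pow_ne_zero 2 ht0
    have e := hq' (t ^ 2) hts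
    rw [(hQd t ht).deriv, hQ t ht, hP t ht]
    field_simp
    linear_combination 2 * e
  · -- p equation
    intro t ht
    obtain ⟨ht0, hts⟩ := hmem t ht
    have hs0 : (t ^ 2 : ℂ) ≠ 0 := pow_ne_zero 2 ht0
    have e := hp' (t ^ 2) hts
    rw [(hPd t ht).deriv, hQ t ht, hP t ht]
    field_simp
    linear_combination 2 * e
  · intro t ht
    obtain ⟨ht0, _⟩ := hmem t ht
    field_simp
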